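/- Let G = (V,E) be a graph with a total order ≺ on E, T a spanning tree of G, and e = (i,j) an edge of G not in T. If the edge order ≺_T is produced by the BFS-based Algorithm 3.1 and the height of i exceeds the height of j by at least 2 (heights in T rooted at the sink s), then e is not externally active with respect to ≺_T. -/

import Mathlib

open Finset
open scoped Classical

def permGraph {n : ℕ} (π : Equiv.Perm (Fin n)) : SimpleGraph (Fin n) :=
  SimpleGraph.fromRel (fun i j => i < j ∧ π.symm j < π.symm i)

/-- `a` is visited strictly before `b` in the breadth-first search of Algorithm 3.1
on the tree `T` rooted at `s`: vertices are visited by increasing height, and within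
a height by decreasing label. -/
def visitBefore {n : ℕ} (T : SimpleGraph (Fin n)) (s a b : Fin n) : Prop :=
  T.dist s a < T.dist s b ∨ (T.dist s a = T.dist s b ∧ b < a)

/-- The total order `≺_T` on edges produced by Algorithm 3.1: an edge is written
`{a, b}` with `a` its first-visited endpoint; edges are ordered by the visit order of
their first-visited endpoint, and for a common first endpoint `a`, the edge with the
larger second endpoint is smaller. -/
def edgeLT {n : ℕ} (T : SimpleGraph (Fin n)) (s : Fin n)
    (e f : Sym2 (Fin n)) : Prop :=
  ∃ a b c d : Fin n, e = s(a, b) ∧ f = s(c, d) ∧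
    visitBefore T s a b ∧ visitBefore T s c d ∧
    (visitBefore T s a c ∨ (a = c ∧ d < b))

/-- An edge `e` of `G` not in the spanning tree `T` is externally active for the edge
order `O` if it is the maximal edge of the unique cycle of `T ∪ {e}`, i.e. every edge
on the `T`-path between the endpoints of `e` is smaller than `e`. -/
def ExtActive {n : ℕ} (G T : SimpleGraph (Fin n))
    (O : Sym2 (Fin n) → Sym2 (Fin n) → Prop) (e : Sym2 (Fin n)) : Prop :=
  e ∈ G.edgeSet ∧ e ∉ T.edgeSet ∧
    ∀ a b : Fin n, e = s(a, b) →
      ∀ p : T.Walk a b, p.IsPath → ∀ f ∈ p.edges, O f e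

/-- if `e = (i, j)` is an edge of `G` not in the spanning tree `T` and
the height of `i` exceeds the height of `j` by at least `2` (heights in `T` rooted at
the sink `s`), then `e` is not externally active for the order `≺_T` of Alg. 3.1. -/
theorem not_extActive_of_height_ge_two {n : ℕ} (G T : SimpleGraph (Fin n))
    (s : Fin n) (hsub : T ≤ G) (htree : T.IsTree) (i j : Fin n)
    (hadj : G.Adj i j) (hnotT : s(i, j) ∉ T.edgeSet)
    (hht : T.dist s j + 2 ≤ T.dist s i) :
    ¬ ExtActive G T (edgeLT T s) (s(i, j)) := by
  rintro ⟨-, -, hmax⟩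
  obtain ⟨w⟩ := htree.isConnected.preconnected i j
  have hp := w.toPath.2
  cases hpath : (w.toPath : T.Walk i j) with
  | nil => omega
  | @cons _ x _ h q =>
    have hlt := hmax i j rfl w.toPath hp (s(i, x)) (by
      rw [hpath, SimpleGraph.Walk.edges_cons]; exact List.mem_cons_self)
    -- dist s x ≥ dist s j + 1
    have hd1 : T.dist x i ≤ 1 := by
      simpa using T.dist_le (SimpleGraph.Walk.cons h.symm SimpleGraph.Walk.nil)
    have htri : T.dist s i ≤ T.dist s x + T.dist x i :=
      htree.isConnected.dist_triangle
    have hx : T.dist s j + 1 ≤ T.dist s x := by omega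
    obtain ⟨a, b, c, d, hf, he, hab, hcd, hor⟩ := hlt
    rw [Sym2.eq_iff] at hf he
    have hdista : T.dist s j < T.dist s a := by
      rcases hf with ⟨ha, -⟩ | ⟨-, ha⟩ <;> subst ha <;> omega
    rcases he with ⟨hc, hd⟩ | ⟨hd, hc⟩
    · subst hc hd
      rcases hcd with h1 | ⟨h1, -⟩ <;> omega
    · subst hc hd
      rcases hor with h1 | ⟨h1, -⟩
      · rcases h1 with h1 | ⟨h1, -⟩ <;> omega
      · subst h1; omega
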